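/- Suppose that for every i the matrix M_i := [[q_i Q, −C],[−Cᵀ, q_i Q]] ∈ ℝ^{2n×2n} is symmetric positive definite, and that the spectral norm of P satisfies ‖P‖₂ ≤ 1. Then A_ν has a unique fixed point z̄, and for any initial vector z_0 ∈ ℝ^{Nn} the Picard–Banach iteration z_{k+1} := A_ν(z_k) converges to z̄ as k → ∞. (Theorem 3, statement 1.) -/

import Mathlib

open Matrix Filter Topology Finset
open scoped Kronecker

noncomputable section

/-- Euclidean norm of a finitely-indexed real vector. -/
def eunorm {ι : Type*} [Fintype ι] (x : ι → ℝ) : ℝ := Real.sqrt (x ⬝ᵥ x)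

/-- `S`-weighted norm `‖x‖_S = √(xᵀ S x)`. -/
def wnorm {ι : Type*} [Fintype ι] (S : Matrix ι ι ℝ) (x : ι → ℝ) : ℝ :=
  Real.sqrt (x ⬝ᵥ S.mulVec x)

/-- Quadratic cost `J(x,z) = q·xᵀQx + 2(Cz+c)ᵀx`. -/
def cost {n : ℕ} (Q C : Matrix (Fin n) (Fin n) ℝ) (qi : ℝ) (ci : Fin n → ℝ)
    (x z : Fin n → ℝ) : ℝ :=
  qi * (x ⬝ᵥ Q.mulVec x) + 2 * ((C.mulVec z + ci) ⬝ᵥ x)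

/-- `xst` is the optimal-response map: for every `z`, `xst z` minimizes the cost over `X`. -/
def IsOptResp {n : ℕ} (X : Set (Fin n → ℝ)) (Q C : Matrix (Fin n) (Fin n) ℝ)
    (qi : ℝ) (ci : Fin n → ℝ) (xst : (Fin n → ℝ) → (Fin n → ℝ)) : Prop :=
  ∀ z, xst z ∈ X ∧ ∀ y ∈ X, cost Q C qi ci (xst z) z ≤ cost Q C qi ci y z

/-- Stacked optimal responses `x⋆(z) = (x^{1⋆}(z^1);…;x^{N⋆}(z^N))`. -/
def extMap {n N : ℕ} (xstar : Fin N → (Fin n → ℝ) → (Fin n → ℝ))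
    (z : Fin N × Fin n → ℝ) : Fin N × Fin n → ℝ :=
  fun p => xstar p.1 (fun j => z (p.1, j)) p.2

/-- Extended aggregation map `A_ν(z) = (P^ν ⊗ I_n) x⋆(z)`. -/
def aggMap {n N : ℕ} (P : Matrix (Fin N) (Fin N) ℝ) (ν : ℕ)
    (xstar : Fin N → (Fin n → ℝ) → (Fin n → ℝ)) (z : Fin N × Fin n → ℝ) :
    Fin N × Fin n → ℝ :=
  ((P ^ ν) ⊗ₖ (1 : Matrix (Fin n) (Fin n) ℝ)).mulVec (extMap xstar z)

/-- The matrix `(1/N)·1_N 1_Nᵀ` with all entries `1/N`. -/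
def avgMat (N : ℕ) : Matrix (Fin N) (Fin N) ℝ := Matrix.of fun _ _ => (N : ℝ)⁻¹

/-- Mean-field aggregation map `A(z) = ((1/N)·1 1ᵀ ⊗ I_n) x⋆(z)`. -/
def meanAgg {n N : ℕ} (xstar : Fin N → (Fin n → ℝ) → (Fin n → ℝ))
    (z : Fin N × Fin n → ℝ) : Fin N × Fin n → ℝ :=
  ((avgMat N) ⊗ₖ (1 : Matrix (Fin n) (Fin n) ℝ)).mulVec (extMap xstar z)

/-- Maximum-row-sum matrix norm `‖A‖_∞`. -/
def rowSumNorm {N : ℕ} (A : Matrix (Fin N) (Fin N) ℝ) : ℝ := ⨆ i, ∑ j, |A i j|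

/-- Spectral norm (ℓ²-operator norm) of a real matrix. -/
def specNorm {ι : Type*} [Fintype ι] [DecidableEq ι] (P : Matrix ι ι ℝ) : ℝ :=
  ‖LinearMap.toContinuousLinearMap (Matrix.toEuclideanLin P)‖

/-- Map `A_{m,m}(z) = (P^m ⊗ I_n) x⋆((P^m ⊗ I_n) z)`. -/
def halfAgg {n N : ℕ} (P : Matrix (Fin N) (Fin N) ℝ) (m : ℕ)
    (xstar : Fin N → (Fin n → ℝ) → (Fin n → ℝ)) (z : Fin N × Fin n → ℝ) :
    Fin N × Fin n → ℝ :=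
  ((P ^ m) ⊗ₖ (1 : Matrix (Fin n) (Fin n) ℝ)).mulVec
    (extMap xstar (((P ^ m) ⊗ₖ (1 : Matrix (Fin n) (Fin n) ℝ)).mulVec z))

/-! ### Auxiliary machinery for the Banach–Picard argument -/

/-- Sum of squares of the entries of a finitely-indexed real vector. -/
def esq {ι : Type*} [Fintype ι] (v : ι → ℝ) : ℝ := ∑ i, v i ^ 2

lemma esq_nonneg {ι : Type*} [Fintype ι] (v : ι → ℝ) : 0 ≤ esq v :=
  Finset.sum_nonneg fun _ _ => sq_nonneg _

lemma dot_self_eq_esq {ι : Type*} [Fintype ι] (v : ι → ℝ) : v ⬝ᵥ v = esq v := by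
  simp [dotProduct, esq, sq]

lemma esq_smul {ι : Type*} [Fintype ι] (c : ℝ) (v : ι → ℝ) : esq (c • v) = c^2 * esq v := by
  simp [esq, mul_sum, mul_pow]

/-- Cauchy–Schwarz for `dotProduct`. -/
lemma abs_dot_le {ι : Type*} [Fintype ι] (u v : ι → ℝ) :
    |u ⬝ᵥ v| ≤ Real.sqrt (esq u) * Real.sqrt (esq v) := by
  have h := Finset.sum_mul_sq_le_sq_mul_sq Finset.univ u v
  rw [← Real.sqrt_mul (esq_nonneg u)]
  have habs : |u ⬝ᵥ v| = Real.sqrt ((u ⬝ᵥ v) ^ 2) := (Real.sqrt_sq_eq_abs _).symm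
  rw [habs]
  exact Real.sqrt_le_sqrt (by simpa [dotProduct, esq] using h)

lemma norm_toE {ι : Type*} [Fintype ι] (v : ι → ℝ) :
    ‖(WithLp.equiv 2 (ι → ℝ)).symm v‖ = Real.sqrt (esq v) := by
  rw [EuclideanSpace.norm_eq]
  congr 1
  unfold esq
  congr 1 with i
  rw [WithLp.equiv_symm_apply, WithLp.ofLp_toLp, Real.norm_eq_abs, sq_abs]

lemma dot_symm {n : ℕ} {Q : Matrix (Fin n) (Fin n) ℝ} (hs : Qᵀ = Q) (a b : Fin n → ℝ) :
    a ⬝ᵥ Q *ᵥ b = b ⬝ᵥ Q *ᵥ a := by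
  conv_lhs => rw [dotProduct_mulVec, ← hs, vecMul_transpose]
  exact dotProduct_comm _ _

lemma mulVec_dot {n : ℕ} (A : Matrix (Fin n) (Fin n) ℝ) (x y : Fin n → ℝ) :
    (A *ᵥ x) ⬝ᵥ y = x ⬝ᵥ (Aᵀ *ᵥ y) := by
  rw [dotProduct_comm, dotProduct_mulVec, dotProduct_comm, ← mulVec_transpose]

lemma quad_eq {n : ℕ} {Q R : Matrix (Fin n) (Fin n) ℝ} (hRsymm : Rᵀ = R) (hRR : R * R = Q)
    (y : Fin n → ℝ) : y ⬝ᵥ Q *ᵥ y = esq (R *ᵥ y) := by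
  rw [← dot_self_eq_esq, ← hRR, ← mulVec_mulVec, dotProduct_mulVec, ← mulVec_transpose, hRsymm]

open scoped MatrixOrder in
/-- Square-root facts for a positive-definite matrix. -/
lemma sqrtQ_facts {n : ℕ} {Q : Matrix (Fin n) (Fin n) ℝ} (hQ : Q.PosDef) :
    ∃ R : Matrix (Fin n) (Fin n) ℝ,
      Rᵀ = R ∧ R * R = Q ∧ R⁻¹ * R = 1 ∧ R * R⁻¹ = 1 ∧ (R⁻¹)ᵀ = R⁻¹ := by
  set R := CFC.sqrt Q with hR
  have hsym : Rᵀ = R := by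
    have := (CFC.sqrt_nonneg Q).posSemidef.isHermitian
    rwa [Matrix.IsHermitian, conjTranspose_eq_transpose_of_trivial] at this
  have hRR : R * R = Q := CFC.sqrt_mul_sqrt_self Q (nonneg_iff_posSemidef.mpr hQ.posSemidef)
  have hdet : IsUnit R.det := by
    have hQdet : Q.det ≠ 0 := ne_of_gt hQ.det_pos
    refine isUnit_iff_ne_zero.mpr fun h => hQdet ?_
    rw [← hRR, det_mul, h, mul_zero]
  refine ⟨R, hsym, hRR, nonsing_inv_mul _ hdet, mul_nonsing_inv _ hdet, ?_⟩
  rw [transpose_nonsing_inv, hsym]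

lemma lin_nonneg_of_aux {L K : ℝ} (hK : 0 ≤ K) (h : ∀ t : ℝ, 0 < t → t ≤ 1 → 0 ≤ L + t * K) :
    0 ≤ L := by
  by_contra hL
  push_neg at hL
  set t := min 1 (-L / (2 * (K + 1))) with ht
  have hKp : (0:ℝ) < K + 1 := by linarith
  have htpos : 0 < t := lt_min one_pos (div_pos (by linarith) (by linarith))
  have ht1 : t ≤ 1 := min_le_left _ _
  have h2 : t ≤ -L / (2 * (K + 1)) := min_le_right _ _
  have h3 : t * K ≤ (-L / (2 * (K + 1))) * (K + 1) := by
    calc t * K ≤ t * (K + 1) := by nlinarith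
    _ ≤ (-L / (2 * (K + 1))) * (K + 1) := by nlinarith
  have h4 : (-L / (2 * (K + 1))) * (K + 1) = -L / 2 := by field_simp
  have := h t htpos ht1
  nlinarith

/-- The variational inequality satisfied by the optimal response. -/
lemma variational_ineq {n : ℕ} {X : Set (Fin n → ℝ)} {Q C : Matrix (Fin n) (Fin n) ℝ}
    (hs : Qᵀ = Q) (hQpsd : ∀ v, 0 ≤ v ⬝ᵥ Q *ᵥ v)
    {qi : ℝ} (hqi : 0 < qi) {ci : Fin n → ℝ}
    {xst : (Fin n → ℝ) → (Fin n → ℝ)}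
    (hconv : Convex ℝ X) (hopt : IsOptResp X Q C qi ci xst)
    (z : Fin n → ℝ) {y : Fin n → ℝ} (hy : y ∈ X) :
    0 ≤ qi * ((y - xst z) ⬝ᵥ Q *ᵥ (xst z)) + (C *ᵥ z + ci) ⬝ᵥ (y - xst z) := by
  set x := xst z with hx
  set d := y - x with hd
  apply lin_nonneg_of_aux (K := qi / 2 * (d ⬝ᵥ Q *ᵥ d))
    (mul_nonneg (by linarith) (hQpsd d))
  intro t htpos ht1
  have hmem : x + t • d ∈ X := by
    have := hconv (hopt z).1 hy (a := 1 - t) (b := t) (by linarith) (le_of_lt htpos) (by ring)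
    convert this using 1
    simp [hd]
    module
  have hle := (hopt z).2 _ hmem
  rw [← hx] at hle
  unfold cost at hle
  have hexp : (x + t • d) ⬝ᵥ Q *ᵥ (x + t • d)
      = x ⬝ᵥ Q *ᵥ x + 2 * t * (d ⬝ᵥ Q *ᵥ x) + t ^ 2 * (d ⬝ᵥ Q *ᵥ d) := by
    simp only [mulVec_add, mulVec_smul, dotProduct_add, add_dotProduct, dotProduct_smul,
      smul_dotProduct, smul_eq_mul]
    rw [dot_symm hs x d]
    ring
  have hlin : (C *ᵥ z + ci) ⬝ᵥ (x + t • d) = (C *ᵥ z + ci) ⬝ᵥ x + t * ((C *ᵥ z + ci) ⬝ᵥ d) := by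
    rw [dotProduct_add, dotProduct_smul]; simp [smul_eq_mul]
  rw [hexp, hlin] at hle
  have key : 0 ≤ t * (qi * (d ⬝ᵥ Q *ᵥ x) + (C *ᵥ z + ci) ⬝ᵥ d + t * (qi / 2 * (d ⬝ᵥ Q *ᵥ d))) := by
    nlinarith
  have h5 : 0 ≤ qi * (d ⬝ᵥ Q *ᵥ x) + (C *ᵥ z + ci) ⬝ᵥ d + t * (qi / 2 * (d ⬝ᵥ Q *ᵥ d)) := by
    by_contra hc
    push_neg at hc
    nlinarith
  linarith [h5]

/-- The optimal response is a `κ`-contraction in the `√Q`-weighted norm. -/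
lemma block_contract {n : ℕ} {X : Set (Fin n → ℝ)} {Q C R : Matrix (Fin n) (Fin n) ℝ}
    (hs : Qᵀ = Q) (hQpsd : ∀ v, 0 ≤ v ⬝ᵥ Q *ᵥ v)
    (hRsymm : Rᵀ = R) (hRR : R * R = Q) (hRiR : R⁻¹ * R = 1) (hRRi : R * R⁻¹ = 1)
    {qi : ℝ} (hqi : 0 < qi) {ci : Fin n → ℝ}
    {xst : (Fin n → ℝ) → (Fin n → ℝ)}
    (hconv : Convex ℝ X) (hopt : IsOptResp X Q C qi ci xst)
    {κ : ℝ} (hκ0 : 0 ≤ κ)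
    (hκ : ∀ w, esq ((R⁻¹ * C * R⁻¹) *ᵥ w) ≤ (κ * qi)^2 * esq w)
    (z1 z2 : Fin n → ℝ) :
    esq (R *ᵥ (xst z1 - xst z2)) ≤ κ^2 * esq (R *ᵥ (z1 - z2)) := by
  set x1 := xst z1
  set x2 := xst z2
  set d := x1 - x2 with hd
  set e := z1 - z2 with he
  have vi1 := variational_ineq hs hQpsd hqi hconv hopt z1 (hopt z2).1
  have vi2 := variational_ineq hs hQpsd hqi hconv hopt z2 (hopt z1).1
  have hsum : qi * (d ⬝ᵥ Q *ᵥ d) ≤ -((C *ᵥ e) ⬝ᵥ d) := by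
    have h1 : (x2 - x1) ⬝ᵥ Q *ᵥ x1 + (x1 - x2) ⬝ᵥ Q *ᵥ x2 = -(d ⬝ᵥ Q *ᵥ d) := by
      simp only [hd, sub_dotProduct, mulVec_sub, dotProduct_sub]
      rw [dot_symm hs x2 x1]
      ring
    have h2 : (C *ᵥ z1 + ci) ⬝ᵥ (x2 - x1) + (C *ᵥ z2 + ci) ⬝ᵥ (x1 - x2) = -((C *ᵥ e) ⬝ᵥ d) := by
      simp only [he, hd, add_dotProduct, dotProduct_sub, sub_dotProduct, mulVec_sub]
      ring
    nlinarith [vi1, vi2]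
  set a := Real.sqrt (esq (R *ᵥ d)) with ha
  set b := Real.sqrt (esq (R *ᵥ e)) with hb
  have ha0 : 0 ≤ a := Real.sqrt_nonneg _
  have hb0 : 0 ≤ b := Real.sqrt_nonneg _
  have ha2 : a ^ 2 = esq (R *ᵥ d) := Real.sq_sqrt (esq_nonneg _)
  have hb2 : b ^ 2 = esq (R *ᵥ e) := Real.sq_sqrt (esq_nonneg _)
  have hQd : d ⬝ᵥ Q *ᵥ d = a ^ 2 := by
    rw [ha2, ← dot_self_eq_esq, ← hRR, ← mulVec_mulVec, dotProduct_mulVec,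
      ← mulVec_transpose, hRsymm]
  have hCed : (C *ᵥ e) ⬝ᵥ d = ((R⁻¹ * C * R⁻¹) *ᵥ (R *ᵥ e)) ⬝ᵥ (R *ᵥ d) := by
    have h3 : (R⁻¹ * C * R⁻¹) *ᵥ (R *ᵥ e) = R⁻¹ *ᵥ (C *ᵥ e) := by
      rw [mulVec_mulVec, Matrix.mul_assoc, Matrix.mul_assoc, hRiR, Matrix.mul_one,
        ← mulVec_mulVec]
    rw [h3]
    rw [dotProduct_mulVec, ← mulVec_transpose, hRsymm, mulVec_mulVec, hRRi, one_mulVec]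
  have hGbound : Real.sqrt (esq ((R⁻¹ * C * R⁻¹) *ᵥ (R *ᵥ e))) ≤ κ * qi * b := by
    have := hκ (R *ᵥ e)
    have h4 : Real.sqrt ((κ * qi)^2 * esq (R *ᵥ e)) = κ * qi * b := by
      rw [Real.sqrt_mul (sq_nonneg _), Real.sqrt_sq (by positivity), hb]
    calc Real.sqrt (esq ((R⁻¹ * C * R⁻¹) *ᵥ (R *ᵥ e))) ≤ Real.sqrt ((κ * qi)^2 * esq (R *ᵥ e)) :=
          Real.sqrt_le_sqrt this
      _ = κ * qi * b := h4
  have hchain : qi * a ^ 2 ≤ κ * qi * b * a := by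
    calc qi * a ^ 2 = qi * (d ⬝ᵥ Q *ᵥ d) := by rw [hQd]
      _ ≤ -((C *ᵥ e) ⬝ᵥ d) := hsum
      _ ≤ |(C *ᵥ e) ⬝ᵥ d| := neg_le_abs _
      _ = |((R⁻¹ * C * R⁻¹) *ᵥ (R *ᵥ e)) ⬝ᵥ (R *ᵥ d)| := by rw [hCed]
      _ ≤ Real.sqrt (esq ((R⁻¹ * C * R⁻¹) *ᵥ (R *ᵥ e))) * a := by
          rw [ha]; exact abs_dot_le _ _
      _ ≤ κ * qi * b * a := by
          apply mul_le_mul_of_nonneg_right hGbound ha0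
  have hab : a ≤ κ * b := by
    rcases eq_or_lt_of_le ha0 with h | h
    · rw [← h]; positivity
    · have h5 : qi * a * a ≤ κ * qi * b * a := by nlinarith
      have := le_of_mul_le_mul_right h5 h
      nlinarith
  calc esq (R *ᵥ d) = a ^ 2 := ha2.symm
    _ ≤ (κ * b) ^ 2 := by nlinarith
    _ = κ ^ 2 * b ^ 2 := by ring
    _ = κ ^ 2 * esq (R *ᵥ e) := by rw [hb2]

/-- `M_i ≻ 0` gives the pointwise strict bound `‖R⁻¹CR⁻¹ w‖ < q‖w‖`. -/
lemma pointwise_bound {n : ℕ} {Q C R : Matrix (Fin n) (Fin n) ℝ}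
    (hRsymm : Rᵀ = R) (hRR : R * R = Q) (hRRi : R * R⁻¹ = 1)
    (hRiT : R⁻¹ᵀ = R⁻¹)
    {qi : ℝ} (hqi : 0 < qi)
    (hMi : (Matrix.fromBlocks (qi • Q) (-C) (-Cᵀ) (qi • Q)).PosDef)
    (w : Fin n → ℝ) (hw : w ≠ 0) :
    esq ((R⁻¹ * C * R⁻¹) *ᵥ w) < qi^2 * esq w := by
  set G := R⁻¹ * C * R⁻¹ with hG
  set g := G *ᵥ w with hg
  set u0 := R⁻¹ *ᵥ g with hu0
  set u := qi⁻¹ • u0 with hu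
  set v := R⁻¹ *ᵥ w with hv
  have hRv : R *ᵥ v = w := by rw [hv, mulVec_mulVec, hRRi, one_mulVec]
  have hRu0 : R *ᵥ u0 = g := by rw [hu0, mulVec_mulVec, hRRi, one_mulVec]
  have hv0 : v ≠ 0 := fun h => hw (by rw [← hRv, h, mulVec_zero])
  have hx0 : Sum.elim u v ≠ 0 := by
    intro h
    exact hv0 (funext fun j => congrFun h (Sum.inr j))
  have hpos := hMi.dotProduct_mulVec_pos hx0
  rw [show star (Sum.elim u v) = Sum.elim u v from star_trivial _] at hpos
  rw [fromBlocks_mulVec, sumElim_dotProduct_sumElim] at hpos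
  have e1 : u ⬝ᵥ (qi • Q) *ᵥ u = qi⁻¹ * esq g := by
    rw [smul_mulVec, dotProduct_smul, hu, smul_dotProduct]
    rw [show u0 ⬝ᵥ Q *ᵥ qi⁻¹ • u0 = qi⁻¹ * (u0 ⬝ᵥ Q *ᵥ u0) by
      rw [mulVec_smul, dotProduct_smul]; simp]
    rw [quad_eq hRsymm hRR, hRu0]
    simp [smul_eq_mul]
    field_simp
  have e2 : v ⬝ᵥ (qi • Q) *ᵥ v = qi * esq w := by
    rw [smul_mulVec, dotProduct_smul, quad_eq hRsymm hRR, hRv, smul_eq_mul]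
  have e3 : u0 ⬝ᵥ C *ᵥ v = esq g := by
    rw [hu0, mulVec_dot, hRiT, hv, mulVec_mulVec, mulVec_mulVec, ← hG, ← hg, dot_self_eq_esq]
  have e4 : u ⬝ᵥ (-C) *ᵥ v = -(qi⁻¹ * esq g) := by
    rw [neg_mulVec, dotProduct_neg, hu, smul_dotProduct, e3, smul_eq_mul]
  have e5 : v ⬝ᵥ (-Cᵀ) *ᵥ u = -(qi⁻¹ * esq g) := by
    rw [neg_mulVec, dotProduct_neg]
    rw [show v ⬝ᵥ Cᵀ *ᵥ u = (C *ᵥ v) ⬝ᵥ u from (mulVec_dot C v u).symm, dotProduct_comm, hu,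
      smul_dotProduct, e3, smul_eq_mul]
  simp only [Sum.elim_comp_inl, Sum.elim_comp_inr] at hpos
  rw [dotProduct_add, dotProduct_add, e1, e2, e4, e5] at hpos
  have hpos' : qi⁻¹ * esq g < qi * esq w := by linarith
  have h6 := mul_lt_mul_of_pos_left hpos' hqi
  have h7 : qi * (qi⁻¹ * esq g) = esq g := by field_simp
  nlinarith [h6]

/-- A strict pointwise norm bound over a compact sphere gives a uniform contraction factor. -/
lemma exists_kappa_of_pointwise {n : ℕ} (hn : 0 < n) (G : Matrix (Fin n) (Fin n) ℝ)
    {qi : ℝ} (hqi : 0 < qi)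
    (hpt : ∀ w : Fin n → ℝ, w ≠ 0 → esq (G *ᵥ w) < qi^2 * esq w) :
    ∃ κ : ℝ, 0 ≤ κ ∧ κ < 1 ∧ ∀ w, esq (G *ᵥ w) ≤ (κ * qi)^2 * esq w := by
  haveI : Nonempty (Fin n) := ⟨⟨0, hn⟩⟩
  set E := EuclideanSpace ℝ (Fin n)
  set eq2 := WithLp.equiv 2 (Fin n → ℝ) with heq
  have hesq_cont : Continuous fun v : Fin n → ℝ => esq (G *ᵥ v) := by
    have h1 : Continuous fun v : Fin n → ℝ => G *ᵥ v :=
      LinearMap.continuous_of_finiteDimensional (Matrix.mulVecLin G)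
    have h2 : Continuous fun v : Fin n → ℝ => esq v :=
      continuous_finset_sum _ fun i _ => (continuous_apply i).pow 2
    exact h2.comp h1
  have hf : Continuous fun x : E => esq (G *ᵥ (eq2 x)) :=
    hesq_cont.comp (PiLp.continuous_ofLp 2 (fun _ : Fin n => ℝ))
  have hsne : (Metric.sphere (0 : E) 1).Nonempty := by
    haveI : Nontrivial E := (WithLp.equiv 2 (Fin n → ℝ)).nontrivial
    exact NormedSpace.sphere_nonempty.mpr zero_le_one
  obtain ⟨x0, hx0mem, hx0max⟩ :=
    (isCompact_sphere (0 : E) 1).exists_isMaxOn hsne hf.continuousOn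
  have hx0norm : ‖x0‖ = 1 := mem_sphere_zero_iff_norm.mp hx0mem
  set w0 : Fin n → ℝ := eq2 x0 with hw0
  have hx0eq : (eq2.symm w0 : E) = x0 := eq2.symm_apply_apply x0
  have hesqw0 : esq w0 = 1 := by
    have := norm_toE w0
    rw [hx0eq, hx0norm] at this
    nlinarith [esq_nonneg w0, Real.sq_sqrt (esq_nonneg w0), this]
  have hw0ne : w0 ≠ 0 := by
    intro h
    rw [h] at hesqw0
    simp [esq] at hesqw0
  have hmax : esq (G *ᵥ w0) < qi ^ 2 := by
    have := hpt w0 hw0ne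
    rwa [hesqw0, mul_one] at this
  set m := esq (G *ᵥ w0) with hm
  have hm0 : 0 ≤ m := esq_nonneg _
  refine ⟨Real.sqrt m / qi, by positivity, ?_, ?_⟩
  · rw [div_lt_one hqi]
    have : Real.sqrt m < Real.sqrt (qi ^ 2) := Real.sqrt_lt_sqrt hm0 hmax
    rwa [Real.sqrt_sq hqi.le] at this
  · intro w
    have hcoef : (Real.sqrt m / qi * qi) ^ 2 = m := by
      rw [div_mul_cancel₀ _ (ne_of_gt hqi), Real.sq_sqrt hm0]
    rw [hcoef]
    rcases eq_or_ne w 0 with rfl | hw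
    · simp [esq, Matrix.mulVec_zero]
    · have hesqw : 0 < esq w := by
        rcases (esq_nonneg w).lt_or_eq with h | h
        · exact h
        · exfalso; apply hw
          have hz : ∀ i, w i = 0 := by
            intro i
            have hle : w i ^ 2 ≤ esq w := Finset.single_le_sum
              (f := fun i => w i ^ 2) (fun i _ => sq_nonneg _) (Finset.mem_univ i)
            nlinarith [sq_nonneg (w i)]
          funext i; exact hz i
      set s := Real.sqrt (esq w) with hs
      have hs0 : 0 < s := Real.sqrt_pos.mpr hesqw
      set w' := s⁻¹ • w with hw'
      have hesqw' : esq w' = 1 := by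
        rw [hw', esq_smul]
        field_simp
        rw [Real.sq_sqrt hesqw.le]
      have hmem : (eq2.symm w' : E) ∈ Metric.sphere (0 : E) 1 := by
        rw [mem_sphere_zero_iff_norm, norm_toE, hesqw', Real.sqrt_one]
      have hle := hx0max hmem
      have hle2 : esq (G *ᵥ (eq2 (eq2.symm w'))) ≤ m := hle
      rw [eq2.apply_symm_apply] at hle2
      rw [hw', mulVec_smul, esq_smul] at hle2
      have hfin : esq (G *ᵥ w) ≤ m * s ^ 2 := by
        have h8 : (s⁻¹)^2 * esq (G *ᵥ w) ≤ m := hle2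
        calc esq (G *ᵥ w) = s^2 * ((s⁻¹)^2 * esq (G *ᵥ w)) := by field_simp
          _ ≤ s^2 * m := by nlinarith [h8]
          _ = m * s^2 := by ring
      rwa [hs, Real.sq_sqrt hesqw.le] at hfin

lemma kron_mulVec {n N : ℕ} (A : Matrix (Fin N) (Fin N) ℝ) (w : Fin N × Fin n → ℝ)
    (p : Fin N × Fin n) :
    ((A ⊗ₖ (1 : Matrix (Fin n) (Fin n) ℝ)) *ᵥ w) p = ∑ k, A p.1 k * w (k, p.2) := by
  rcases p with ⟨i, j⟩
  simp only [Matrix.mulVec, dotProduct, Fintype.sum_prod_type, kroneckerMap_apply,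
    Matrix.one_apply]
  congr 1 with k
  rw [Finset.sum_eq_single j] <;> simp +contextual [eq_comm]

lemma kron_mulVec' {n N : ℕ} (B : Matrix (Fin n) (Fin n) ℝ) (w : Fin N × Fin n → ℝ)
    (p : Fin N × Fin n) :
    (((1 : Matrix (Fin N) (Fin N) ℝ) ⊗ₖ B) *ᵥ w) p = ∑ l, B p.2 l * w (p.1, l) := by
  rcases p with ⟨i, j⟩
  simp only [Matrix.mulVec, dotProduct, Fintype.sum_prod_type, kroneckerMap_apply,
    Matrix.one_apply]
  rw [Finset.sum_eq_single i] <;> simp +contextual [eq_comm]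

lemma esq_prod {n N : ℕ} (w : Fin N × Fin n → ℝ) : esq w = ∑ j, esq (fun k => w (k, j)) := by
  rw [esq, Fintype.sum_prod_type, Finset.sum_comm]
  simp [esq]

lemma esq_prod' {n N : ℕ} (w : Fin N × Fin n → ℝ) : esq w = ∑ i, esq (fun j => w (i, j)) := by
  rw [esq, Fintype.sum_prod_type]
  simp [esq]

lemma esq_mulVec_le {N : ℕ} (P : Matrix (Fin N) (Fin N) ℝ) (hP2 : specNorm P ≤ 1)
    (x : Fin N → ℝ) : esq (P *ᵥ x) ≤ esq x := by
  set eqN := WithLp.equiv 2 (Fin N → ℝ) with heq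
  have h1 : ‖LinearMap.toContinuousLinearMap (Matrix.toEuclideanLin P) (eqN.symm x)‖
      ≤ specNorm P * ‖eqN.symm x‖ := ContinuousLinearMap.le_opNorm _ _
  have h2 : (LinearMap.toContinuousLinearMap (Matrix.toEuclideanLin P)) (eqN.symm x)
      = eqN.symm (P *ᵥ x) := by
    rw [LinearMap.coe_toContinuousLinearMap']
    exact Matrix.toEuclideanLin_apply_piLp_toLp P x
  rw [h2, norm_toE, norm_toE] at h1
  have h3 : Real.sqrt (esq (P *ᵥ x)) ≤ Real.sqrt (esq x) := by
    calc Real.sqrt (esq (P *ᵥ x)) ≤ specNorm P * Real.sqrt (esq x) := h1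
      _ ≤ 1 * Real.sqrt (esq x) := by
          apply mul_le_mul_of_nonneg_right hP2 (Real.sqrt_nonneg _)
      _ = Real.sqrt (esq x) := one_mul _
  nlinarith [Real.sq_sqrt (esq_nonneg (P *ᵥ x)), Real.sq_sqrt (esq_nonneg x),
    Real.sqrt_nonneg (esq (P *ᵥ x)), Real.sqrt_nonneg (esq x), h3]

lemma esq_pow_mulVec_le {N : ℕ} (P : Matrix (Fin N) (Fin N) ℝ) (hP2 : specNorm P ≤ 1)
    (ν : ℕ) (x : Fin N → ℝ) : esq ((P ^ ν) *ᵥ x) ≤ esq x := by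
  induction ν with
  | zero => simp [pow_zero, Matrix.one_mulVec]
  | succ k ih =>
    rw [pow_succ', ← Matrix.mulVec_mulVec]
    exact (esq_mulVec_le P hP2 _).trans ih

lemma kron_esq_le {n N : ℕ} (P : Matrix (Fin N) (Fin N) ℝ) (hP2 : specNorm P ≤ 1) (ν : ℕ)
    (w : Fin N × Fin n → ℝ) :
    esq (((P ^ ν) ⊗ₖ (1 : Matrix (Fin n) (Fin n) ℝ)) *ᵥ w) ≤ esq w := by
  rw [esq_prod, esq_prod (w := w)]
  apply Finset.sum_le_sum
  intro j _
  have hcol : (fun k => (((P ^ ν) ⊗ₖ (1 : Matrix (Fin n) (Fin n) ℝ)) *ᵥ w) (k, j))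
      = (P ^ ν) *ᵥ (fun k => w (k, j)) := by
    funext k
    rw [kron_mulVec]
    rfl
  rw [hcol]
  exact esq_pow_mulVec_le P hP2 ν _

/-- Theorem 3, case 1: if each `M_i ≻ 0` and `‖P‖₂ ≤ 1`, then `A_ν` has a
unique fixed point and the Picard–Banach iteration converges to it from any start. -/
theorem picardBanach_converges {n N ν : ℕ} (hn : 0 < n) (hN : 0 < N) (hν : 0 < ν)
    (X : Fin N → Set (Fin n → ℝ))
    (hXne : ∀ i, (X i).Nonempty) (hXconv : ∀ i, Convex ℝ (X i))
    (hXcpt : ∀ i, IsCompact (X i))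
    (Q C : Matrix (Fin n) (Fin n) ℝ) (hQ : Q.PosDef)
    (q : Fin N → ℝ) (hq : ∀ i, 0 < q i) (c : Fin N → Fin n → ℝ)
    (P : Matrix (Fin N) (Fin N) ℝ) (hPnn : ∀ i j, 0 ≤ P i j)
    (hPrs : ∀ i, ∑ j, P i j = 1)
    (hM : ∀ i, (Matrix.fromBlocks (q i • Q) (-C) (-Cᵀ) (q i • Q)).PosDef)
    (hP2 : specNorm P ≤ 1)
    (xstar : Fin N → (Fin n → ℝ) → (Fin n → ℝ))
    (hxstar : ∀ i, IsOptResp (X i) Q C (q i) (c i) (xstar i)) :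
    ∃ zbar : Fin N × Fin n → ℝ,
      aggMap P ν xstar zbar = zbar ∧
      (∀ z, aggMap P ν xstar z = z → z = zbar) ∧
      ∀ z0 : Fin N × Fin n → ℝ,
        Tendsto (fun k => (aggMap P ν xstar)^[k] z0) atTop (𝓝 zbar) := by
  haveI : Nonempty (Fin N) := ⟨⟨0, hN⟩⟩
  obtain ⟨R, hRsymm, hRR, hRiR, hRRi, hRiT⟩ := sqrtQ_facts hQ
  have hs : Qᵀ = Q := by rw [← hRR, transpose_mul, hRsymm]
  have hQpsd : ∀ v, 0 ≤ v ⬝ᵥ Q *ᵥ v := fun v => by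
    rw [quad_eq hRsymm hRR]; exact esq_nonneg _
  -- per-agent contraction factors
  have hexists : ∀ i : Fin N, ∃ κ : ℝ, 0 ≤ κ ∧ κ < 1 ∧
      ∀ w, esq ((R⁻¹ * C * R⁻¹) *ᵥ w) ≤ (κ * q i)^2 * esq w := fun i =>
    exists_kappa_of_pointwise hn _ (hq i)
      (fun w hw => pointwise_bound hRsymm hRR hRRi hRiT (hq i) (hM i) w hw)
  choose κf hκf0 hκf1 hκfb using hexists
  set κ : ℝ := Finset.univ.sup' Finset.univ_nonempty κf with hκ
  have hκlt : κ < 1 := (Finset.sup'_lt_iff _).mpr fun i _ => hκf1 i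
  have hκle : ∀ i, κf i ≤ κ := fun i => Finset.le_sup' κf (Finset.mem_univ i)
  have hκ0 : 0 ≤ κ := le_trans (hκf0 (Classical.arbitrary _)) (hκle _)
  -- per-block contraction with the uniform κ
  have hblock : ∀ (i : Fin N) (z1 z2 : Fin n → ℝ),
      esq (R *ᵥ (xstar i z1 - xstar i z2)) ≤ κ^2 * esq (R *ᵥ (z1 - z2)) := by
    intro i z1 z2
    have h1 := block_contract hs hQpsd hRsymm hRR hRiR hRRi (hq i) (hXconv i) (hxstar i)
      (hκf0 i) (hκfb i) z1 z2
    have h2 : (κf i)^2 * esq (R *ᵥ (z1 - z2)) ≤ κ^2 * esq (R *ᵥ (z1 - z2)) := by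
      apply mul_le_mul_of_nonneg_right _ (esq_nonneg _)
      exact pow_le_pow_left₀ (hκf0 i) (hκle i) 2
    linarith
  -- the weighting matrices
  set WM : Matrix (Fin N × Fin n) (Fin N × Fin n) ℝ := (1 : Matrix (Fin N) (Fin N) ℝ) ⊗ₖ R
    with hWM
  set WMi : Matrix (Fin N × Fin n) (Fin N × Fin n) ℝ := (1 : Matrix (Fin N) (Fin N) ℝ) ⊗ₖ R⁻¹
    with hWMi
  have hWW : WMi * WM = 1 := by
    rw [hWMi, hWM, ← Matrix.mul_kronecker_mul, Matrix.one_mul, hRiR, Matrix.one_kronecker_one]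
  have hWW' : WM * WMi = 1 := by
    rw [hWMi, hWM, ← Matrix.mul_kronecker_mul, Matrix.one_mul, hRRi, Matrix.one_kronecker_one]
  have hcomm : WM * ((P ^ ν) ⊗ₖ (1 : Matrix (Fin n) (Fin n) ℝ))
      = ((P ^ ν) ⊗ₖ (1 : Matrix (Fin n) (Fin n) ℝ)) * WM := by
    rw [hWM, ← Matrix.mul_kronecker_mul, ← Matrix.mul_kronecker_mul, Matrix.one_mul,
      Matrix.mul_one, Matrix.mul_one, Matrix.one_mul]
  -- blockwise description of WM
  have hWMblk : ∀ (z : Fin N × Fin n → ℝ) (i : Fin N),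
      (fun j => (WM *ᵥ z) (i, j)) = R *ᵥ (fun j => z (i, j)) := by
    intro z i
    funext j
    rw [hWM, kron_mulVec']
    rfl
  -- the stacked best-response is a κ-contraction in the weighted norm
  have hstack : ∀ u v : Fin N × Fin n → ℝ,
      esq (WM *ᵥ (extMap xstar u - extMap xstar v)) ≤ κ^2 * esq (WM *ᵥ (u - v)) := by
    intro u v
    rw [esq_prod' (w := WM *ᵥ (extMap xstar u - extMap xstar v)),
      esq_prod' (w := WM *ᵥ (u - v)), Finset.mul_sum]
    apply Finset.sum_le_sum
    intro i _
    rw [hWMblk, hWMblk]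
    have hb1 : (fun j => (extMap xstar u - extMap xstar v) (i, j))
        = xstar i (fun j => u (i, j)) - xstar i (fun j => v (i, j)) := by
      funext j; rfl
    have hb2 : (fun j => (u - v) (i, j)) = (fun j => u (i, j)) - (fun j => v (i, j)) := by
      funext j; rfl
    rw [hb1, hb2]
    exact hblock i _ _
  -- overall contraction of the conjugated aggregation map
  have hkey : ∀ u v : Fin N × Fin n → ℝ,
      esq (WM *ᵥ aggMap P ν xstar u - WM *ᵥ aggMap P ν xstar v)
        ≤ κ^2 * esq (WM *ᵥ u - WM *ᵥ v) := by
    intro u v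
    have h1 : WM *ᵥ aggMap P ν xstar u - WM *ᵥ aggMap P ν xstar v
        = ((P ^ ν) ⊗ₖ (1 : Matrix (Fin n) (Fin n) ℝ)) *ᵥ
            (WM *ᵥ (extMap xstar u - extMap xstar v)) := by
      rw [← Matrix.mulVec_sub]
      show WM *ᵥ (aggMap P ν xstar u - aggMap P ν xstar v) = _
      rw [show aggMap P ν xstar u - aggMap P ν xstar v
          = ((P ^ ν) ⊗ₖ (1 : Matrix (Fin n) (Fin n) ℝ)) *ᵥ (extMap xstar u - extMap xstar v) by
        rw [Matrix.mulVec_sub]; rfl]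
      rw [Matrix.mulVec_mulVec, Matrix.mulVec_mulVec, hcomm]
    rw [h1]
    calc esq (((P ^ ν) ⊗ₖ (1 : Matrix (Fin n) (Fin n) ℝ)) *ᵥ
            (WM *ᵥ (extMap xstar u - extMap xstar v)))
        ≤ esq (WM *ᵥ (extMap xstar u - extMap xstar v)) := kron_esq_le P hP2 ν _
      _ ≤ κ^2 * esq (WM *ᵥ (u - v)) := hstack u v
      _ = κ^2 * esq (WM *ᵥ u - WM *ᵥ v) := by rw [Matrix.mulVec_sub]
  -- move to Euclidean space and apply the Banach fixed point theorem
  set E := EuclideanSpace ℝ (Fin N × Fin n)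
  set eqZ := WithLp.equiv 2 (Fin N × Fin n → ℝ) with heqZ
  set Φ : (Fin N × Fin n → ℝ) → E := fun z => eqZ.symm (WM *ᵥ z) with hΦ
  set Ψ : E → (Fin N × Fin n → ℝ) := fun ζ => WMi *ᵥ (eqZ ζ) with hΨ
  have hΨΦ : ∀ z, Ψ (Φ z) = z := by
    intro z
    show WMi *ᵥ (eqZ (eqZ.symm (WM *ᵥ z))) = z
    rw [eqZ.apply_symm_apply, Matrix.mulVec_mulVec, hWW, Matrix.one_mulVec]
  have hΦΨ : ∀ ζ, Φ (Ψ ζ) = ζ := by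
    intro ζ
    show eqZ.symm (WM *ᵥ (WMi *ᵥ eqZ ζ)) = ζ
    rw [Matrix.mulVec_mulVec, hWW', Matrix.one_mulVec, eqZ.symm_apply_apply]
  set F : E → E := fun ζ => Φ (aggMap P ν xstar (Ψ ζ)) with hF
  have hdistE : ∀ ζ η : E, dist ζ η = Real.sqrt (esq (eqZ ζ - eqZ η)) := by
    intro ζ η
    rw [dist_eq_norm]
    rw [show ζ - η = eqZ.symm (eqZ ζ - eqZ η) by
      rfl]
    exact norm_toE _
  have hK : ContractingWith ⟨κ, hκ0⟩ F := by
    constructor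
    · exact_mod_cast hκlt
    · apply LipschitzWith.of_dist_le_mul
      intro ζ η
      rw [hdistE, hdistE]
      have h1 : eqZ (F ζ) - eqZ (F η)
          = WM *ᵥ aggMap P ν xstar (Ψ ζ) - WM *ᵥ aggMap P ν xstar (Ψ η) := by
        rw [hF]
        simp only [hΦ, eqZ.apply_symm_apply]
      have h2 : WM *ᵥ (Ψ ζ) = eqZ ζ := by
        rw [hΨ, Matrix.mulVec_mulVec, hWW', Matrix.one_mulVec]
      have h3 : WM *ᵥ (Ψ η) = eqZ η := by
        rw [hΨ, Matrix.mulVec_mulVec, hWW', Matrix.one_mulVec]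
      have h4 := hkey (Ψ ζ) (Ψ η)
      rw [h2, h3] at h4
      rw [h1]
      calc Real.sqrt (esq (WM *ᵥ aggMap P ν xstar (Ψ ζ) - WM *ᵥ aggMap P ν xstar (Ψ η)))
          ≤ Real.sqrt (κ^2 * esq (eqZ ζ - eqZ η)) := Real.sqrt_le_sqrt h4
        _ = κ * Real.sqrt (esq (eqZ ζ - eqZ η)) := by
            rw [Real.sqrt_mul (sq_nonneg _), Real.sqrt_sq hκ0]
        _ = (⟨κ, hκ0⟩ : NNReal) * Real.sqrt (esq (eqZ ζ - eqZ η)) := by norm_num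
  haveI : Nonempty E := ⟨0⟩
  set zE := hK.fixedPoint F with hzE
  have hfixE : F zE = zE := hK.fixedPoint_isFixedPt
  refine ⟨Ψ zE, ?_, ?_, ?_⟩
  · -- fixed point
    have : aggMap P ν xstar (Ψ zE) = Ψ (Φ (aggMap P ν xstar (Ψ zE))) := (hΨΦ _).symm
    rw [this]
    show Ψ (F zE) = Ψ zE
    rw [hfixE]
  · -- uniqueness
    intro z hz
    have hfp : Function.IsFixedPt F (Φ z) := by
      show Φ (aggMap P ν xstar (Ψ (Φ z))) = Φ z
      rw [hΨΦ, hz]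
    have huniq := hK.fixedPoint_unique hfp
    calc z = Ψ (Φ z) := (hΨΦ z).symm
      _ = Ψ zE := by rw [huniq, ← hzE]
  · -- convergence
    intro z0
    have hiter : ∀ k, F^[k] (Φ z0) = Φ ((aggMap P ν xstar)^[k] z0) := by
      intro k
      induction k with
      | zero => simp
      | succ m ih =>
        rw [Function.iterate_succ_apply', Function.iterate_succ_apply', ih]
        show Φ (aggMap P ν xstar (Ψ (Φ _))) = _
        rw [hΨΦ]
    have htend : Tendsto (fun k => F^[k] (Φ z0)) atTop (𝓝 zE) :=
      hK.tendsto_iterate_fixedPoint (Φ z0)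
    have hΨcont : Continuous Ψ := by
      have h1 : Continuous fun w : Fin N × Fin n → ℝ => WMi *ᵥ w :=
        LinearMap.continuous_of_finiteDimensional (Matrix.mulVecLin WMi)
      exact h1.comp (PiLp.continuous_ofLp 2 (fun _ : Fin N × Fin n => ℝ))
    have hfin := (hΨcont.tendsto zE).comp htend
    convert hfin using 1
    funext k
    show (aggMap P ν xstar)^[k] z0 = Ψ (F^[k] (Φ z0))
    rw [hiter, hΨΦ]
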